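/- Let G be a finite connected simple graph with at least one edge, and let δ ∈ (0,1] satisfy Gut(G,δ) = 1 (δ is the unique positive root of Gut*(G,x) = 1 − Gut(G,x)). Then δ = 1 if and only if G is isomorphic to the path P₂ on two vertices. -/
import Mathlib

open scoped Classical in
/-- The Gutman polynomial `Gut(G,x)`: the sum over unordered pairs of distinct vertices of
`deg a * deg b * x ^ d(a,b)`. -/
noncomputable def gutmanPoly {V : Type*} [Fintype V] (G : SimpleGraph V) (x : ℝ) : ℝ :=
  ∑ p ∈ Finset.univ.filter (fun p : Sym2 V => ¬ p.IsDiag),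
    Sym2.lift ⟨fun a b => ((G.degree a : ℝ) * (G.degree b : ℝ)) * x ^ G.dist a b,
      fun a b => by dsimp only; rw [SimpleGraph.dist_comm]; ring⟩ p

open scoped Classical in
/-- Every vertex of a complete graph on two vertices has degree `1`. -/
lemma degree_eq_one_of_card_two {V : Type*} [Fintype V] (G : SimpleGraph V)
    (h2 : Fintype.card V = 2) (hG : G = ⊤) (c : V) : G.degree c = 1 := by
  classical
  have hx := SimpleGraph.complete_graph_degree (V := V) c
  rw [h2] at hx
  rw [hG]
  convert hx

open scoped Classical in
/-- If `G` is the complete graph on a 2-element vertex type, then `Gut(G,x) = x`. -/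
lemma gutmanPoly_of_card_two {V : Type*} [Fintype V] (G : SimpleGraph V)
    (h2 : Fintype.card V = 2) (hG : G = ⊤) (x : ℝ) : gutmanPoly G x = x := by
  classical
  have h2' : Nat.card V = 2 := by rw [Nat.card_eq_fintype_card, h2]
  obtain ⟨a, b, hab, huniv⟩ := Nat.card_eq_two_iff.mp h2'
  have hfilter : (Finset.univ.filter (fun p : Sym2 V => ¬ p.IsDiag)) = {s(a, b)} := by
    ext p
    induction p with
    | _ x y =>
      simp only [Finset.mem_filter, Finset.mem_univ, true_and, Sym2.isDiag_iff_proj_eq,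
        Finset.mem_singleton, Sym2.eq_iff]
      constructor
      · intro hxy
        have hx : x = a ∨ x = b := by
          have : x ∈ ({a, b} : Set V) := huniv ▸ Set.mem_univ x
          simpa using this
        have hy : y = a ∨ y = b := by
          have : y ∈ ({a, b} : Set V) := huniv ▸ Set.mem_univ y
          simpa using this
        rcases hx with rfl | rfl <;> rcases hy with rfl | rfl <;> tauto
      · rintro (⟨rfl, rfl⟩ | ⟨rfl, rfl⟩) <;> [exact hab; exact hab.symm]
  have hadj : G.Adj a b := by rw [hG]; exact hab
  have hdist : G.dist a b = 1 := SimpleGraph.dist_eq_one_iff_adj.mpr hadj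
  have hdega := degree_eq_one_of_card_two G h2 hG a
  have hdegb := degree_eq_one_of_card_two G h2 hG b
  rw [gutmanPoly, hfilter, Finset.sum_singleton, Sym2.lift_mk]
  simp [hdist, hdega, hdegb]

open scoped Classical in
/-- If every vertex has degree at least one and `Gut(G,1) = 1`, then `G` has at most
two vertices. -/
lemma card_le_two_of_gutmanPoly_one {V : Type*} [Fintype V] (G : SimpleGraph V)
    (hdeg : ∀ c : V, 1 ≤ G.degree c) (h : gutmanPoly G 1 = 1) : Fintype.card V ≤ 2 := by
  classical
  rw [gutmanPoly] at h
  have hterm : ∀ p ∈ Finset.univ.filter (fun p : Sym2 V => ¬ p.IsDiag),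
      (1 : ℝ) ≤ Sym2.lift ⟨fun a b => ((G.degree a : ℝ) * (G.degree b : ℝ)) * (1:ℝ) ^ G.dist a b,
        fun a b => by dsimp only; rw [SimpleGraph.dist_comm]; ring⟩ p := by
    intro p _
    induction p with
    | _ a b =>
      rw [Sym2.lift_mk]
      simp only [one_pow, mul_one]
      have := mul_le_mul (α := ℝ) (Nat.one_le_cast.mpr (hdeg a)) (Nat.one_le_cast.mpr (hdeg b))
        (by norm_num) (by positivity)
      simpa using this
  have hsum := Finset.card_nsmul_le_sum _ _ _ hterm
  rw [h, nsmul_eq_mul, mul_one] at hsum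
  have hcardle : (Finset.univ.filter (fun p : Sym2 V => ¬ p.IsDiag)).card ≤ 1 := by
    exact_mod_cast hsum
  have hcardeq : (Finset.univ.filter (fun p : Sym2 V => ¬ p.IsDiag)).card
      = (Fintype.card V).choose 2 := by
    rw [← Sym2.card_subtype_not_diag (α := V)]
    convert (Fintype.card_subtype (fun p : Sym2 V => ¬ p.IsDiag)).symm
  rw [hcardeq] at hcardle
  by_contra hc
  push_neg at hc
  have h3 : 3 ≤ Fintype.card V := hc
  have : 3 ≤ (Fintype.card V).choose 2 := by
    calc 3 = Nat.choose 3 2 := by decide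
    _ ≤ (Fintype.card V).choose 2 := Nat.choose_le_choose 2 h3
  omega

theorem gutman_root_index_eq_one_iff {V : Type*} [Fintype V] (G : SimpleGraph V)
    (hconn : G.Connected) (hedge : G.edgeSet.Nonempty)
    (δ : ℝ) (hδ : δ ∈ Set.Ioc (0 : ℝ) 1)
    (hroot : gutmanPoly G δ = 1) :
    δ = 1 ↔ Nonempty (G ≃g SimpleGraph.pathGraph 2) := by
  classical
  obtain ⟨e, he⟩ := hedge
  induction e with
  | _ u v =>
  have huv : G.Adj u v := he
  have hne : u ≠ v := huv.ne
  have hcard2 : 2 ≤ Fintype.card V := Fintype.one_lt_card_iff_nontrivial.mpr ⟨u, v, hne⟩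
  have hdeg : ∀ c : V, 1 ≤ G.degree c := by
    intro c
    rw [Nat.one_le_iff_ne_zero, ← Nat.pos_iff_ne_zero, SimpleGraph.degree_pos_iff_exists_adj]
    obtain ⟨d, hd⟩ := Fintype.exists_ne_of_one_lt_card hcard2 c
    obtain ⟨w⟩ := hconn c d
    cases w with
    | nil => exact absurd rfl hd
    | cons h _ => exact ⟨_, h⟩
  constructor
  · rintro rfl
    have h2 : Fintype.card V = 2 :=
      le_antisymm (card_le_two_of_gutmanPoly_one G hdeg hroot) hcard2
    have h2' : Nat.card V = 2 := by rw [Nat.card_eq_fintype_card, h2]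
    obtain ⟨x, y, hxy, huniv⟩ := Nat.card_eq_two_iff.mp h2'
    have hmem : ∀ z : V, z = x ∨ z = y := fun z => by
      have : z ∈ ({x, y} : Set V) := huniv ▸ Set.mem_univ z
      simpa using this
    have hxyadj : G.Adj x y := by
      rcases hmem u with rfl | rfl <;> rcases hmem v with rfl | rfl <;>
        first | exact huv | exact huv.symm | exact absurd rfl hne
    have hG : G = ⊤ := by
      ext a b
      simp only [SimpleGraph.top_adj]
      refine ⟨fun h => h.ne, fun hab => ?_⟩
      rcases hmem a with rfl | rfl <;> rcases hmem b with rfl | rfl <;>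
        first | exact hxyadj | exact hxyadj.symm | exact absurd rfl hab
    have h2'' : Fintype.card V = Fintype.card (Fin 2) := by simp [h2]
    refine ⟨?_⟩
    rw [hG, SimpleGraph.pathGraph_two_eq_top]
    exact SimpleGraph.Iso.completeGraph (Fintype.equivOfCardEq h2'')
  · rintro ⟨e⟩
    have e' : G ≃g (⊤ : SimpleGraph (Fin 2)) := SimpleGraph.pathGraph_two_eq_top ▸ e
    have h2 : Fintype.card V = 2 := by
      rw [Fintype.card_congr e'.toEquiv]; simp
    have hG : G = ⊤ := by
      ext a b
      rw [← e'.map_adj_iff]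
      simp only [SimpleGraph.top_adj]
      exact e'.toEquiv.injective.ne_iff
    have := gutmanPoly_of_card_two G h2 hG δ
    rw [hroot] at this
    exact this.symm
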